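/- arXiv:2207.02355 — 6 statements merged into one kernel-verified Lean document; each statement's English description precedes it below -/
import Mathlib

section
/- Let (Σ_G, *_G, emp_G) and (Σ_L, *_L, emp_L) be separation algebras, and let Σ be a set with emp_G × emp_L ⊆ Σ ⊆ Σ_G × Σ_L that is closed under decomposition: whenever g₁ #_G g₂, l₁ #_L l₂ and (g₁ *_G g₂, l₁ *_L l₂) ∈ Σ, also (g₁, l₁) ∈ Σ. Define composition on Σ componentwise: (g₁, l₁) * (g₂, l₂) := (g₁ *_G g₂, l₁ *_L l₂), defined exactly when both component products are defined and the resulting pair lies in Σ. Then (Σ, *, emp_G × emp_L) is a separation algebra. -/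
open Classical

/-- A separation algebra: a partial commutative monoid with a set of units.
The partial binary operation is modeled as an `Option`-valued function;
`op a b = some c` means the composition is defined and equals `c`. -/
structure SepAlg (α : Type) : Type where
  op : α → α → Option α
  emp : Set α
  comm : ∀ a b : α, op a b = op b a
  assoc : ∀ a b c : α,
    (op a b).bind (fun x => op x c) = (op b c).bind (fun y => op a y)
  unit_exists : ∀ a : α, ∃ u ∈ emp, op a u = some a
  unit_undef : ∀ u u' : α, u ∈ emp → u' ∈ emp → u ≠ u' → op u u' = none

/-- Componentwise composition on the subset `S` of the product of the carriers:
defined exactly when both component products are defined and the resulting pair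
lies in `S`. -/
noncomputable def pOp {G L : Type} (A : SepAlg G) (B : SepAlg L) {S : Set (G × L)}
    (x y : { p : G × L // p ∈ S }) : Option { p : G × L // p ∈ S } :=
  match A.op x.1.1 y.1.1, B.op x.1.2 y.1.2 with
  | some g, some l => if h : (g, l) ∈ S then some ⟨(g, l), h⟩ else none
  | _, _ => none


lemma pOp_some_iff {G L : Type} (A : SepAlg G) (B : SepAlg L) {S : Set (G × L)}
    (x y z : { p : G × L // p ∈ S }) :
    pOp A B x y = some z ↔
      A.op x.1.1 y.1.1 = some z.1.1 ∧ B.op x.1.2 y.1.2 = some z.1.2 := by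
  unfold pOp
  rcases hg : A.op x.1.1 y.1.1 with _ | g <;>
    rcases hl : B.op x.1.2 y.1.2 with _ | l
  · simp
  · simp
  · simp
  · show (if h : (g, l) ∈ S then some (⟨(g, l), h⟩ : { p : G × L // p ∈ S })
        else none) = some z ↔ _
    by_cases hm : (g, l) ∈ S
    · rw [dif_pos hm]
      constructor
      · intro h
        rw [Option.some_inj] at h
        rw [← h]
        exact ⟨rfl, rfl⟩
      · rintro ⟨h1, h2⟩
        exact congrArg some (Subtype.ext
          (Prod.ext (Option.some_inj.mp h1) (Option.some_inj.mp h2)))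
    · rw [dif_neg hm]
      constructor
      · intro h; cases h
      · rintro ⟨h1, h2⟩
        have hz : (g, l) = z.1 :=
          Prod.ext (Option.some_inj.mp h1) (Option.some_inj.mp h2)
        exact absurd (hz ▸ z.2 : (g, l) ∈ S) hm

lemma pOp_comm {G L : Type} (A : SepAlg G) (B : SepAlg L) {S : Set (G × L)}
    (x y : { p : G × L // p ∈ S }) : pOp A B x y = pOp A B y x := by
  unfold pOp; rw [A.comm, B.comm]

lemma pOp_assoc_aux {G L : Type} (A : SepAlg G) (B : SepAlg L) {S : Set (G × L)}
    (hdec : ∀ (g₁ g₂ : G) (l₁ l₂ : L) (g : G) (l : L),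
      A.op g₁ g₂ = some g → B.op l₁ l₂ = some l → (g, l) ∈ S → (g₁, l₁) ∈ S)
    (x y z w : { p : G × L // p ∈ S })
    (h : (pOp A B x y).bind (fun v => pOp A B v z) = some w) :
    (pOp A B y z).bind (fun v => pOp A B x v) = some w := by
  rw [Option.bind_eq_some_iff] at h
  obtain ⟨v, hv, hw⟩ := h
  rw [pOp_some_iff] at hv hw
  have hA := A.assoc x.1.1 y.1.1 z.1.1
  have hB := B.assoc x.1.2 y.1.2 z.1.2
  rw [hv.1] at hA
  simp only [Option.bind_some] at hA
  rw [hw.1] at hA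
  rw [hv.2] at hB
  simp only [Option.bind_some] at hB
  rw [hw.2] at hB
  obtain ⟨gm, hgm, hgm'⟩ := Option.bind_eq_some_iff.mp hA.symm
  obtain ⟨lm, hlm, hlm'⟩ := Option.bind_eq_some_iff.mp hB.symm
  have hmem : (gm, lm) ∈ S := by
    refine hdec gm x.1.1 lm x.1.2 w.1.1 w.1.2 ?_ ?_ w.2
    · rw [A.comm]; exact hgm'
    · rw [B.comm]; exact hlm'
  rw [Option.bind_eq_some_iff]
  refine ⟨⟨(gm, lm), hmem⟩, ?_, ?_⟩
  · rw [pOp_some_iff]; exact ⟨hgm, hlm⟩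
  · rw [pOp_some_iff]; exact ⟨hgm', hlm'⟩

/-- if `(Σ_G, *_G, emp_G)` and `(Σ_L, *_L, emp_L)` are separation
algebras and `emp_G × emp_L ⊆ Σ ⊆ Σ_G × Σ_L` is closed under decomposition,
then `Σ` with componentwise composition and units `emp_G × emp_L` is a
separation algebra. -/
theorem stmt0 {G L : Type} (A : SepAlg G) (B : SepAlg L) (S : Set (G × L))
    (hemp : ∀ g ∈ A.emp, ∀ l ∈ B.emp, (g, l) ∈ S)
    (hdec : ∀ (g₁ g₂ : G) (l₁ l₂ : L) (g : G) (l : L),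
      A.op g₁ g₂ = some g → B.op l₁ l₂ = some l → (g, l) ∈ S → (g₁, l₁) ∈ S) :
    ∃ P : SepAlg { p : G × L // p ∈ S },
      P.op = pOp A B ∧
      P.emp = { x : { p : G × L // p ∈ S } | x.1.1 ∈ A.emp ∧ x.1.2 ∈ B.emp } := by
  refine ⟨⟨pOp A B, { x | x.1.1 ∈ A.emp ∧ x.1.2 ∈ B.emp }, pOp_comm A B, ?_, ?_, ?_⟩, rfl, rfl⟩
  · -- assoc
    intro a b c
    apply Option.ext
    intro w
    constructor
    · exact pOp_assoc_aux A B hdec a b c w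
    · intro h
      have h' : (pOp A B c b).bind (fun v => pOp A B v a) = some w := by
        rw [← h]
        rw [pOp_comm A B c b]
        congr 1
        funext v
        exact pOp_comm A B v a
      have := pOp_assoc_aux A B hdec c b a w h'
      rw [← this]
      rw [pOp_comm A B b a]
      congr 1
      funext v
      exact (pOp_comm A B c v).symm
  · -- unit_exists
    rintro ⟨⟨g, l⟩, hs⟩
    obtain ⟨ug, hug, hgu⟩ := A.unit_exists g
    obtain ⟨ul, hul, hlu⟩ := B.unit_exists l
    exact ⟨⟨(ug, ul), hemp ug hug ul hul⟩, ⟨hug, hul⟩,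
      (pOp_some_iff A B _ _ _).mpr ⟨hgu, hlu⟩⟩
  · -- unit_undef
    rintro ⟨⟨g, l⟩, hs⟩ ⟨⟨g', l'⟩, hs'⟩ ⟨hg, hl⟩ ⟨hg', hl'⟩ hne
    unfold pOp
    by_cases hgg : g = g'
    · have hll : l ≠ l' := by
        intro h; exact hne (Subtype.ext (by simp [hgg, h]))
      rw [B.unit_undef l l' hl hl' hll]
      rcases A.op g g' <;> rfl
    · rw [A.unit_undef g g' hg hg' hgg]
end

section
/- Let Σ be a separation algebra with command semantics as below. (f-seq) If ⟦c₁⟧ is local and wp(c₁)(wp(c₂)(o)) ⊆ wp(c)(o), then ⟨p⟩ c₁ ⟨q⟩ * ⟨q⟩ c₂ ⟨o⟩ ⊆ ⟨p⟩ c ⟨o⟩. (f-frame) If ⟦c⟧ is local, then for all predicates p, q, o: ⟨p⟩ c ⟨q⟩ ⊆ ⟨p * o⟩ c ⟨q * o⟩. -/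
open Classical

/-- Separating conjunction of predicates. -/
def SepAlg.sepConj {α : Type} (A : SepAlg α) (p q : Set α) : Set α :=
  { s | ∃ a ∈ p, ∃ b ∈ q, A.op a b = some s }

/-- Separating implication of predicates: `p -* q = { s | {s} * p ⊆ q }`. -/
def SepAlg.sepImp {α : Type} (A : SepAlg α) (p q : Set α) : Set α :=
  { s | ∀ a ∈ p, ∀ t : α, A.op s a = some t → t ∈ q }

/-- Lifting of a command semantics to predicates (post-image). -/
def postP {β : Type} (f : β → Set β) (p : Set β) : Set β :=
  { t | ∃ s ∈ p, t ∈ f s }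

/-- Locality of a command semantics with respect to a separation algebra. -/
def IsLocalCmd {α : Type} (A : SepAlg α) (f : α → Set α) : Prop :=
  ∀ p q o : Set α, postP f p ⊆ q → postP f (A.sepConj p o) ⊆ A.sepConj q o

/-- Weakest precondition. -/
def wpre {α : Type} (f : α → Set α) (q : Set α) : Set α := { s | f s ⊆ q }

/-- The future predicate `⟨p⟩ c ⟨q⟩ := p -* wp(c)(q)`. -/
def fut {α : Type} (A : SepAlg α) (f : α → Set α) (p q : Set α) : Set α :=
  A.sepImp p (wpre f q)

/-- Reassociation helper: if `a*b = s` and `s*c = t`, then `a*c` is defined,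
say `u`, and `u*b = t`. -/
lemma reassoc {α : Type} (A : SepAlg α) {a b c s t : α}
    (h1 : A.op a b = some s) (h2 : A.op s c = some t) :
    ∃ u, A.op a c = some u ∧ A.op u b = some t := by
  have h3 := A.assoc a b c
  rw [h1, Option.bind_some, h2] at h3
  -- h3 : some t = (A.op b c).bind fun y => A.op a y
  cases hv : A.op b c with
  | none => rw [hv] at h3; simp at h3
  | some v =>
    rw [hv] at h3
    rw [Option.bind_some] at h3
    -- h3 : some t = A.op a v
    have h4 := A.assoc a c b
    rw [A.comm c b, hv, Option.bind_some, ← h3] at h4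
    cases hu : A.op a c with
    | none => rw [hu] at h4; simp at h4
    | some u =>
      rw [hu] at h4
      exact ⟨u, rfl, h4.symm ▸ rfl⟩

/-- the rules f-seq and f-frame for futures, assuming locality. -/
theorem stmt3 {α : Type} (A : SepAlg α) :
    (∀ c c₁ c₂ : α → Set α, IsLocalCmd A c₁ →
      ∀ p q o : Set α, wpre c₁ (wpre c₂ o) ⊆ wpre c o →
        A.sepConj (fut A c₁ p q) (fut A c₂ q o) ⊆ fut A c p o) ∧
    (∀ c : α → Set α, IsLocalCmd A c →
      ∀ p q o : Set α, fut A c p q ⊆ fut A c (A.sepConj p o) (A.sepConj q o)) := by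
  constructor
  · rintro c c₁ c₂ hloc p q o hwp s ⟨s₁, hs₁, s₂, hs₂, hop⟩ a ha t hta
    -- t = s * a, s = s₁ * s₂ ; get u = s₁ * a with u * s₂ = t
    obtain ⟨u, hu1, hu2⟩ := reassoc A hop hta
    have hu : u ∈ wpre c₁ q := hs₁ a ha u hu1
    apply hwp
    intro x hx
    -- x ∈ c₁ t; t ∈ (wpre c₁ q) * {s₂}
    have hx' : x ∈ A.sepConj q {s₂} := by
      apply hloc (wpre c₁ q) q {s₂} (fun y ⟨z, hz, hy⟩ => hz hy)
      exact ⟨t, ⟨u, hu, s₂, rfl, hu2⟩, hx⟩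
    obtain ⟨b, hb, b', hb', hbop⟩ := hx'
    rcases hb' with rfl
    exact hs₂ b hb x (by rw [A.comm]; exact hbop)
  · rintro c hloc p q o s hs x ⟨a, ha, b, hb, hab⟩ t hta
    have h := A.assoc s a b
    rw [hab, Option.bind_some, hta] at h
    obtain ⟨u, hu1, hu2⟩ : ∃ u, A.op s a = some u ∧ A.op u b = some t := by
      cases hu : A.op s a with
      | none => rw [hu] at h; simp at h
      | some u => rw [hu, Option.bind_some] at h; exact ⟨u, rfl, h⟩
    have hu : u ∈ wpre c q := hs a ha u hu1
    intro y hy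
    have hy' : y ∈ A.sepConj q {b} := by
      apply hloc (wpre c q) q {b} (fun z ⟨w, hw, hz⟩ => hw hz)
      exact ⟨t, ⟨u, hu, b, rfl, hu2⟩, hy⟩
    obtain ⟨b1, hb1, b2, hb2, hbop⟩ := hy'
    rcases hb2 with rfl
    exact ⟨b1, hb1, b2, hb, hbop⟩
end

section
/- Let ⟦c⟧ be a local command semantics on a separation algebra Σ, lifted to computation histories. If f ⊆ Σ⁺ is frameable, then for every history predicate a ⊆ Σ⁺: ⟦c⟧(a * f) ⊆ ⟦c⟧(a) * f. -/
open Classical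

/-- Pointwise lifting of a partial composition to lists (defined iff the lists
have equal length and are pointwise composable). -/
def listOp {β : Type} (f : β → β → Option β) : List β → List β → Option (List β)
  | [], [] => some []
  | a :: as, b :: bs => do
      let c ← f a b
      let cs ← listOp f as bs
      pure (c :: cs)
  | _, _ => none

/-- Separating conjunction of history predicates. -/
def hSep {β : Type} (f : β → β → Option β) (a b : Set (List β)) : Set (List β) :=
  { σ | ∃ τ₁ ∈ a, ∃ τ₂ ∈ b, listOp f τ₁ τ₂ = some σ }

/-- Separating implication of history predicates (restricted to nonempty
sequences, i.e. to Σ⁺). -/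
def hSepImp {β : Type} (f : β → β → Option β) (a b : Set (List β)) : Set (List β) :=
  { σ | σ ≠ [] ∧ ∀ τ ∈ a, ∀ ρ : List β, listOp f σ τ = some ρ → ρ ∈ b }

/-- Frameable history predicates: closed under duplicating the last state. -/
def Frameable {β : Type} (a : Set (List β)) : Prop :=
  ∀ (σ : List β) (s : β), σ ++ [s] ∈ a → σ ++ [s, s] ∈ a

/-- The now predicate `now(p)`. -/
def nowP {α : Type} (p : Set α) : Set (List α) :=
  { σ | ∃ (ρ : List α) (s : α), s ∈ p ∧ σ = ρ ++ [s] }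

/-- The past predicate `past(p)`. -/
def pastP {α : Type} (p : Set α) : Set (List α) :=
  { σ | ∃ (ρ₁ : List α) (s : α) (ρ₂ : List α), s ∈ p ∧ σ = ρ₁ ++ s :: ρ₂ }

/-- Lifting of a command semantics to computation histories. -/
def lsem {α : Type} (f : α → Set α) (σ : List α) : Set (List α) :=
  { τ | ∃ (ρ : List α) (s₁ s₂ : α), σ = ρ ++ [s₁] ∧ s₂ ∈ f s₁ ∧ τ = ρ ++ [s₁, s₂] }

/-- Weakest precondition on history predicates (over Σ⁺, i.e. nonempty sequences). -/
def hwp {α : Type} (f : α → Set α) (a : Set (List α)) : Set (List α) :=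
  { σ | σ ≠ [] ∧ lsem f σ ⊆ a }


lemma listOp_snoc {β : Type} (op : β → β → Option β) :
    ∀ (as bs cs : List β) (a b c : β), listOp op as bs = some cs →
      op a b = some c → listOp op (as ++ [a]) (bs ++ [b]) = some (cs ++ [c]) := by
  intro as
  induction as with
  | nil =>
    intro bs cs a b c h hop
    cases bs with
    | nil =>
      simp [listOp] at h
      subst h
      simp [listOp, hop]
    | cons x xs => simp [listOp] at h
  | cons x xs ih =>
    intro bs cs a b c h hop
    cases bs with
    | nil => simp [listOp] at h
    | cons y ys =>
      simp [listOp, Option.bind_eq_some_iff] at h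
      obtain ⟨d, hd, ds, hds, hc⟩ := h
      subst hc
      simp [listOp, Option.bind_eq_some_iff, hd]
      exact ih ys ds a b c hds hop

lemma listOp_snoc_inv {β : Type} (op : β → β → Option β) :
    ∀ (σ₁ σ₂ γ : List β) (s : β), listOp op σ₁ σ₂ = some (γ ++ [s]) →
      ∃ ρ₁ t ρ₂ u, σ₁ = ρ₁ ++ [t] ∧ σ₂ = ρ₂ ++ [u] ∧
        listOp op ρ₁ ρ₂ = some γ ∧ op t u = some s := by
  intro σ₁
  induction σ₁ with
  | nil =>
    intro σ₂ γ s h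
    cases σ₂ with
    | nil => simp [listOp] at h
    | cons y ys => simp [listOp] at h
  | cons x xs ih =>
    intro σ₂ γ s h
    cases σ₂ with
    | nil => simp [listOp] at h
    | cons y ys =>
      simp [listOp, Option.bind_eq_some_iff] at h
      obtain ⟨d, hd, ds, hds, hc⟩ := h
      cases γ with
      | nil =>
        simp at hc
        obtain ⟨hc1, hc2⟩ := hc
        subst hc1; subst hc2
        cases xs with
        | nil =>
          cases ys with
          | nil => exact ⟨[], x, [], y, rfl, rfl, by simp [listOp], hd⟩
          | cons z zs => simp [listOp] at hds
        | cons w ws => cases ys <;> simp [listOp, Option.bind_eq_some_iff] at hds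
      | cons g γ' =>
        simp at hc
        obtain ⟨hc1, hc2⟩ := hc
        subst hc1
        obtain ⟨ρ₁, t, ρ₂, u, h1, h2, h3, h4⟩ := ih ys γ' s (hc2 ▸ hds)
        exact ⟨x :: ρ₁, t, y :: ρ₂, u, by simp [h1], by simp [h2],
          by simp [listOp, Option.bind_eq_some_iff, hd, h3], h4⟩

/-- for a local command semantics lifted to computation histories
and a frameable history predicate `f`, we have `⟦c⟧(a * f) ⊆ ⟦c⟧(a) * f`. -/
theorem stmt5 {α : Type} (A : SepAlg α) (c : α → Set α) (hloc : IsLocalCmd A c)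
    (f : Set (List α)) (hfpos : ([] : List α) ∉ f) (hf : Frameable f)
    (a : Set (List α)) (hapos : ([] : List α) ∉ a) :
    postP (lsem c) (hSep A.op a f) ⊆ hSep A.op (postP (lsem c) a) f := by
  rintro τ ⟨σ, hσ, ρ, s₁, s₂, hσeq, hs₂, hτeq⟩
  obtain ⟨σ₁, hσ₁a, σ₂, hσ₂f, hop⟩ := hσ
  subst hσeq
  obtain ⟨ρ₁, t₁, ρ₂, u₁, h1, h2, h3, h4⟩ := listOp_snoc_inv A.op σ₁ σ₂ ρ s₁ hop
  -- apply locality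
  have hpost : postP c ({t₁} : Set α) ⊆ c t₁ := by
    rintro x ⟨y, hy, hx⟩
    simp at hy; subst hy; exact hx
  have hloc' := hloc {t₁} (c t₁) {u₁} hpost
  have hs₁mem : s₁ ∈ A.sepConj ({t₁} : Set α) {u₁} := ⟨t₁, rfl, u₁, rfl, h4⟩
  have hs₂mem : s₂ ∈ A.sepConj (c t₁) ({u₁} : Set α) :=
    hloc' ⟨s₁, hs₁mem, hs₂⟩
  obtain ⟨t₂, ht₂, u, hu, hop2⟩ := hs₂mem
  simp only [Set.mem_singleton_iff] at hu
  rw [hu] at hop2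
  refine ⟨ρ₁ ++ [t₁, t₂], ⟨σ₁, hσ₁a, ρ₁, t₁, t₂, h1, ht₂, rfl⟩,
    ρ₂ ++ [u₁, u₁], hf ρ₂ u₁ (h2 ▸ hσ₂f), ?_⟩
  have e1 : ρ₁ ++ [t₁, t₂] = (ρ₁ ++ [t₁]) ++ [t₂] := by simp
  have e2 : ρ₂ ++ [u₁, u₁] = (ρ₂ ++ [u₁]) ++ [u₁] := by simp
  rw [e1, e2, hτeq]
  have : ρ ++ [s₁, s₂] = (ρ ++ [s₁]) ++ [s₂] := by simp
  rw [this]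
  exact listOp_snoc A.op (ρ₁ ++ [t₁]) (ρ₂ ++ [u₁]) (ρ ++ [s₁]) t₂ u₁ s₂
    (listOp_snoc A.op ρ₁ ρ₂ ρ t₁ u₁ s₁ h3 h4) hop2
end

section
/- Over a separation algebra Σ: (i) for every state predicate p ⊆ Σ, the now predicate now(p) and the past predicate past(p) are frameable; (ii) if history predicates a, b ⊆ Σ⁺ are frameable, then so are a * b, a ∩ b, and a ∪ b. -/
open Classical

lemma listOp_concat {β : Type} (f : β → β → Option β) :
    ∀ (as bs cs : List β) (x y z : β), listOp f as bs = some cs → f x y = some z →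
      listOp f (as ++ [x]) (bs ++ [y]) = some (cs ++ [z]) := by
  intro as
  induction as with
  | nil =>
    intro bs cs x y z h hf
    cases bs with
    | nil => simp [listOp] at h; subst h; simp [listOp, hf]
    | cons b bs => simp [listOp] at h
  | cons a as ih =>
    intro bs cs x y z h hf
    cases bs with
    | nil => simp [listOp] at h
    | cons b bs =>
      simp only [listOp, Option.bind_eq_bind, Option.bind_eq_some_iff] at h
      obtain ⟨c, hc, cs', hcs', hval⟩ := h
      simp only [Option.pure_def, Option.some.injEq] at hval
      subst hval
      have hx := ih bs cs' x y z hcs' hf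
      simp [List.cons_append, listOp, hc, hx]

lemma listOp_split_last {β : Type} (f : β → β → Option β) :
    ∀ (p q σ : List β) (s : β), listOp f p q = some (σ ++ [s]) →
      ∃ p' x q' y, p = p' ++ [x] ∧ q = q' ++ [y] ∧
        listOp f p' q' = some σ ∧ f x y = some s := by
  intro p
  induction p with
  | nil =>
    intro q σ s h
    cases q <;> simp [listOp] at h
  | cons a as ih =>
    intro q σ s h
    cases q with
    | nil => simp [listOp] at h
    | cons b bs =>
      simp only [listOp, Option.bind_eq_bind, Option.bind_eq_some_iff] at h
      obtain ⟨c, hc, cs, hcs, hval⟩ := h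
      simp only [Option.pure_def, Option.some.injEq] at hval
      cases σ with
      | nil =>
        simp only [List.nil_append, List.cons.injEq] at hval
        obtain ⟨rfl, hnil⟩ := hval
        subst hnil
        cases as with
        | nil =>
          cases bs with
          | nil => exact ⟨[], a, [], b, rfl, rfl, rfl, hc⟩
          | cons b' bs' => simp [listOp] at hcs
        | cons a' as' =>
          cases bs with
          | nil => simp [listOp] at hcs
          | cons b' bs' =>
            simp only [listOp, Option.bind_eq_bind, Option.bind_eq_some_iff] at hcs
            obtain ⟨_, _, _, _, h⟩ := hcs
            simp at h
      | cons c' σ' =>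
        simp only [List.cons_append, List.cons.injEq] at hval
        obtain ⟨rfl, hcs'⟩ := hval
        obtain ⟨p', x, q', y, rfl, rfl, hop, hf⟩ := ih bs σ' s (hcs'.symm ▸ hcs)
        refine ⟨a :: p', x, b :: q', y, rfl, rfl, ?_, hf⟩
        simp [listOp, hc, hop]

/-- (i) now and past predicates are frameable; (ii) frameability
is preserved by separating conjunction, intersection and union. -/
theorem stmt6 {α : Type} (A : SepAlg α) :
    (∀ p : Set α, Frameable (nowP p) ∧ Frameable (pastP p)) ∧
    (∀ a b : Set (List α), ([] : List α) ∉ a → ([] : List α) ∉ b →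
      Frameable a → Frameable b →
      Frameable (hSep A.op a b) ∧ Frameable (a ∩ b) ∧ Frameable (a ∪ b)) := by
  constructor
  · intro p
    constructor
    · rintro σ s ⟨ρ, t, ht, heq⟩
      have : t = s := by
        have h := congrArg List.getLast? heq; simp at h; exact h.symm
      subst this
      exact ⟨σ ++ [t], t, ht, by simp⟩
    · rintro σ s ⟨ρ₁, t, ρ₂, ht, heq⟩
      exact ⟨ρ₁, t, ρ₂ ++ [s], ht, by rw [show σ ++ [s, s] = (σ ++ [s]) ++ [s] by simp, heq]; simp⟩
  · intro a b _ _ ha hb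
    refine ⟨?_, ?_, ?_⟩
    · rintro σ s ⟨τ₁, hτ₁, τ₂, hτ₂, hop⟩
      obtain ⟨p', x, q', y, rfl, rfl, hop', hf⟩ := listOp_split_last A.op τ₁ τ₂ σ s hop
      refine ⟨p' ++ [x, x], ?_, q' ++ [y, y], ?_, ?_⟩
      · have := ha p' x hτ₁; simpa using this
      · have := hb q' y hτ₂; simpa using this
      · have h1 := listOp_concat A.op p' q' σ x y s hop' hf
        have h2 := listOp_concat A.op (p' ++ [x]) (q' ++ [y]) (σ ++ [s]) x y s h1 hf
        simpa using h2
    · rintro σ s ⟨h1, h2⟩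
      exact ⟨ha σ s h1, hb σ s h2⟩
    · rintro σ s (h | h)
      · exact Or.inl (ha σ s h)
      · exact Or.inr (hb σ s h)
end

section
/- Over a separation algebra Σ, for all state predicates p, q ⊆ Σ: now(p) ⊆ past(p); past(Σ) = Σ⁺; Σ⁺ * past(p) = past(p * Σ); past(∅) = ∅; past(p * q) ⊆ past(p) * past(q); past(p) -* past(q) ⊆ past(p -* q); past(p ∩ q) ⊆ past(p) ∩ past(q); past(p ∪ q) = past(p) ∪ past(q); and past(p) ⊆ past(q) if and only if p ⊆ q. -/
open Classical

lemma listOp_cons {β : Type} (f : β → β → Option β) (a b : β) (as bs : List β) :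
    listOp f (a :: as) (b :: bs) =
      (f a b).bind (fun c => (listOp f as bs).bind (fun cs => some (c :: cs))) := rfl

lemma listOp_append {β : Type} (f : β → β → Option β) :
    ∀ {a b c : List β}, listOp f a b = some c → ∀ {a' b' c' : List β},
      listOp f a' b' = some c' → listOp f (a ++ a') (b ++ b') = some (c ++ c') := by
  intro a
  induction a with
  | nil =>
    intro b c h
    cases b with
    | nil => simp [listOp] at h; subst h; simp
    | cons x xs => simp [listOp] at h
  | cons x xs ih =>
    intro b c h
    cases b with
    | nil => simp [listOp] at h
    | cons y ys =>
      rw [listOp_cons] at h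
      rcases Option.bind_eq_some_iff.mp h with ⟨z, hz, h2⟩
      rcases Option.bind_eq_some_iff.mp h2 with ⟨zs, hzs, h3⟩
      cases Option.some.inj h3
      intro a' b' c' h'
      simp only [List.cons_append, listOp_cons, hz, Option.bind_eq_some_iff]
      exact ⟨z, rfl, ih hzs h' ▸ by simp⟩

lemma listOp_units {α : Type} (A : SepAlg α) :
    ∀ ρ : List α, ∃ υ : List α, listOp A.op ρ υ = some ρ := by
  intro ρ
  induction ρ with
  | nil => exact ⟨[], rfl⟩
  | cons s σ ih =>
    obtain ⟨υ, hυ⟩ := ih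
    obtain ⟨u, _, hu⟩ := A.unit_exists s
    exact ⟨u :: υ, by simp [listOp_cons, hu, hυ]⟩

lemma listOp_mem {β : Type} (f : β → β → Option β) :
    ∀ {xs ys zs : List β}, listOp f xs ys = some zs → ∀ {y : β}, y ∈ ys →
      ∃ x z, x ∈ xs ∧ z ∈ zs ∧ f x y = some z := by
  intro xs
  induction xs with
  | nil =>
    intro ys zs h
    cases ys with
    | nil => intro y hy; simp at hy
    | cons a b => simp [listOp] at h
  | cons x xs ih =>
    intro ys zs h
    cases ys with
    | nil => simp [listOp] at h
    | cons y ys =>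
      rw [listOp_cons] at h
      rcases Option.bind_eq_some_iff.mp h with ⟨z, hz, h2⟩
      rcases Option.bind_eq_some_iff.mp h2 with ⟨zs', hzs, h3⟩
      cases Option.some.inj h3
      intro y' hy'
      rcases List.mem_cons.mp hy' with h | h
      · exact ⟨x, z, List.mem_cons_self, List.mem_cons_self, h ▸ hz⟩
      · obtain ⟨x', z', hx', hz', hfz'⟩ := ih hzs h
        exact ⟨x', z', List.mem_cons_of_mem _ hx', List.mem_cons_of_mem _ hz', hfz'⟩

lemma listOp_all {α : Type} (A : SepAlg α) (p q : Set α) :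
    ∀ σ : List α, (∀ s ∈ σ, ∃ a, a ∈ p ∧ ∃ t, A.op s a = some t ∧ t ∉ q) →
    ∃ τ ρ : List α, listOp A.op σ τ = some ρ ∧ (∀ a ∈ τ, a ∈ p) ∧
      (∀ t ∈ ρ, t ∉ q) ∧ τ.length = σ.length := by
  intro σ
  induction σ with
  | nil => exact fun _ => ⟨[], [], rfl, by simp, by simp, rfl⟩
  | cons s σ ih =>
    intro h
    obtain ⟨a, ha, t, hst, htq⟩ := h s (List.mem_cons_self)
    obtain ⟨τ, ρ, hop, hτ, hρ, hlen⟩ := ih (fun x hx => h x (List.mem_cons_of_mem _ hx))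
    refine ⟨a :: τ, t :: ρ, by simp [listOp_cons, hst, hop], ?_, ?_, by simp [hlen]⟩
    · intro x hx; rcases List.mem_cons.mp hx with h | h
      · exact h ▸ ha
      · exact hτ x h
    · intro x hx; rcases List.mem_cons.mp hx with h | h
      · exact h ▸ htq
      · exact hρ x h

lemma mem_pastP_of_mem {α : Type} {p : Set α} {σ : List α} {s : α}
    (hs : s ∈ σ) (hp : s ∈ p) : σ ∈ pastP p := by
  obtain ⟨l, r, rfl⟩ := List.append_of_mem hs
  exact ⟨l, s, r, hp, rfl⟩

/-- properties of the past operator. -/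
theorem stmt8 {α : Type} (A : SepAlg α) (p q : Set α) :
    nowP p ⊆ pastP p ∧
    pastP (Set.univ : Set α) = { σ : List α | σ ≠ [] } ∧
    hSep A.op { σ : List α | σ ≠ [] } (pastP p) =
      pastP (A.sepConj p (Set.univ : Set α)) ∧
    pastP (∅ : Set α) = (∅ : Set (List α)) ∧
    pastP (A.sepConj p q) ⊆ hSep A.op (pastP p) (pastP q) ∧
    hSepImp A.op (pastP p) (pastP q) ⊆ pastP (A.sepImp p q) ∧
    pastP (p ∩ q) ⊆ pastP p ∩ pastP q ∧
    pastP (p ∪ q) = pastP p ∪ pastP q ∧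
    (pastP p ⊆ pastP q ↔ p ⊆ q) := by
  refine ⟨?_, ?_, ?_, ?_, ?_, ?_, ?_, ?_, ?_⟩
  · -- now ⊆ past
    rintro σ ⟨ρ, s, hs, rfl⟩
    exact ⟨ρ, s, [], hs, rfl⟩
  · -- pastP univ = nonempty
    ext σ
    constructor
    · rintro ⟨ρ₁, s, ρ₂, -, rfl⟩; simp
    · intro h
      cases σ with
      | nil => exact absurd rfl h
      | cons s σ' => exact ⟨[], s, σ', trivial, rfl⟩
  · -- Σ⁺ * past p = past (p * univ)
    ext σ
    constructor
    · rintro ⟨τ₁, hτ₁, τ₂, ⟨ρ₁, a, ρ₂, ha, rfl⟩, hop⟩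
      obtain ⟨x, z, hx, hz, hfz⟩ := listOp_mem A.op hop
        (show a ∈ ρ₁ ++ a :: ρ₂ by simp)
      exact mem_pastP_of_mem hz ⟨a, ha, x, trivial, (A.comm a x).trans hfz⟩
    · rintro ⟨ρ₁, s, ρ₂, ⟨a, ha, b, -, hab⟩, rfl⟩
      obtain ⟨υ₁, hυ₁⟩ := listOp_units A ρ₁
      obtain ⟨υ₂, hυ₂⟩ := listOp_units A ρ₂
      refine ⟨ρ₁ ++ b :: ρ₂, by simp, υ₁ ++ a :: υ₂, ⟨υ₁, a, υ₂, ha, rfl⟩, ?_⟩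
      have hmid : listOp A.op (b :: ρ₂) (a :: υ₂) = some (s :: ρ₂) := by
        simp [listOp_cons, (A.comm b a).trans hab, hυ₂]
      exact listOp_append A.op hυ₁ hmid
  · -- past ∅ = ∅
    ext σ
    constructor
    · rintro ⟨ρ₁, s, ρ₂, h, -⟩; exact h.elim
    · intro h; exact h.elim
  · -- past (p * q) ⊆ past p * past q
    rintro σ ⟨ρ₁, s, ρ₂, ⟨a, ha, b, hb, hab⟩, rfl⟩
    obtain ⟨υ₁, hυ₁⟩ := listOp_units A ρ₁
    obtain ⟨υ₂, hυ₂⟩ := listOp_units A ρ₂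
    refine ⟨ρ₁ ++ a :: ρ₂, ⟨ρ₁, a, ρ₂, ha, rfl⟩, υ₁ ++ b :: υ₂, ⟨υ₁, b, υ₂, hb, rfl⟩, ?_⟩
    have hmid : listOp A.op (a :: ρ₂) (b :: υ₂) = some (s :: ρ₂) := by
      simp [listOp_cons, hab, hυ₂]
    exact listOp_append A.op hυ₁ hmid
  · -- past p -* past q ⊆ past (p -* q)
    rintro σ ⟨hne, h⟩
    by_contra hσ
    have key : ∀ s ∈ σ, ∃ a, a ∈ p ∧ ∃ t, A.op s a = some t ∧ t ∉ q := by
      intro s hs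
      by_contra hcon
      push_neg at hcon
      exact hσ (mem_pastP_of_mem hs (fun a ha t hop => hcon a ha t hop))
    obtain ⟨τ, ρ, hop, hτ, hρ, hlen⟩ := listOp_all A p q σ key
    cases τ with
    | nil =>
      cases σ with
      | nil => exact hne rfl
      | cons x xs => simp at hlen
    | cons a τ' =>
      have hτp : (a :: τ' : List α) ∈ pastP p :=
        ⟨[], a, τ', hτ a (List.mem_cons_self), rfl⟩
      obtain ⟨ρ₁, t, ρ₂, htq, heq⟩ := h _ hτp ρ hop
      exact hρ t (heq ▸ (by simp : t ∈ ρ₁ ++ t :: ρ₂)) htq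
  · -- past (p ∩ q) ⊆ past p ∩ past q
    rintro σ ⟨ρ₁, s, ρ₂, ⟨hp, hq⟩, rfl⟩
    exact ⟨⟨ρ₁, s, ρ₂, hp, rfl⟩, ⟨ρ₁, s, ρ₂, hq, rfl⟩⟩
  · -- past (p ∪ q) = past p ∪ past q
    ext σ
    constructor
    · rintro ⟨ρ₁, s, ρ₂, hs, rfl⟩
      rcases hs with h | h
      · exact Or.inl ⟨ρ₁, s, ρ₂, h, rfl⟩
      · exact Or.inr ⟨ρ₁, s, ρ₂, h, rfl⟩
    · rintro (⟨ρ₁, s, ρ₂, h, rfl⟩ | ⟨ρ₁, s, ρ₂, h, rfl⟩)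
      · exact ⟨ρ₁, s, ρ₂, Or.inl h, rfl⟩
      · exact ⟨ρ₁, s, ρ₂, Or.inr h, rfl⟩
  · -- past p ⊆ past q ↔ p ⊆ q
    constructor
    · intro h s hs
      obtain ⟨ρ₁, t, ρ₂, ht, heq⟩ := h ⟨[], s, [], hs, rfl⟩
      cases ρ₁ with
      | nil =>
        simp only [List.nil_append] at heq
        cases heq
        exact ht
      | cons x xs => simp at heq
    · intro h
      rintro σ ⟨ρ₁, s, ρ₂, hs, rfl⟩
      exact ⟨ρ₁, s, ρ₂, h hs, rfl⟩
end

section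
/- Let Σ be a separation algebra and I a set of valuations; form the product separation algebra Σ × I where (s, i) # (t, j) iff s # t and i = j, with (s, i) * (t, i) := (s * t, i), and units emp × I. For p ⊆ Σ × I define the valuation-constant now and past predicates: now(p) := { ρ·(s, i) | ρ ∈ (Σ × {i})*, (s, i) ∈ p } and past(p) := { ρ₁·(s, i)·ρ₂ | ρ₁, ρ₂ ∈ (Σ × {i})*, (s, i) ∈ p }. Call p pure if p = Σ × J for some J ⊆ I. Then for every pure p ⊆ Σ × I and every q ⊆ Σ × I: now(p) * past(q) = past(p * q), where * on histories is the lifted pointwise composition in (Σ × I)⁺. -/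
open Classical

/-- Composition on the product separation algebra `Σ × I`:
`(s, i) # (t, j)` iff `s # t` and `i = j`, with `(s, i) * (t, i) = (s * t, i)`. -/
noncomputable def valOp {α ι : Type} (A : SepAlg α) (x y : α × ι) : Option (α × ι) :=
  if x.2 = y.2 then (A.op x.1 y.1).map (fun s => (s, x.2)) else none

/-- Separating conjunction of predicates over `Σ × I`. -/
noncomputable def valConj {α ι : Type} (A : SepAlg α) (p q : Set (α × ι)) :
    Set (α × ι) :=
  { z | ∃ a ∈ p, ∃ b ∈ q, valOp A a b = some z }

/-- The valuation-constant now predicate. -/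
def nowV {α ι : Type} (p : Set (α × ι)) : Set (List (α × ι)) :=
  { σ | ∃ (ρ : List (α × ι)) (s : α) (i : ι),
      (s, i) ∈ p ∧ (∀ x ∈ ρ, x.2 = i) ∧ σ = ρ ++ [(s, i)] }

/-- The valuation-constant past predicate. -/
def pastV {α ι : Type} (p : Set (α × ι)) : Set (List (α × ι)) :=
  { σ | ∃ (ρ₁ : List (α × ι)) (s : α) (i : ι) (ρ₂ : List (α × ι)),
      (s, i) ∈ p ∧ (∀ x ∈ ρ₁, x.2 = i) ∧ (∀ x ∈ ρ₂, x.2 = i) ∧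
      σ = ρ₁ ++ (s, i) :: ρ₂ }

/-- Pure predicates: those of the form `Σ × J`. -/
def IsPure {α ι : Type} (p : Set (α × ι)) : Prop :=
  ∃ J : Set ι, p = { x : α × ι | x.2 ∈ J }
section Helpers

variable {β : Type}

lemma listOp_nil_left (f : β → β → Option β) {bs cs : List β}
    (h : listOp f [] bs = some cs) : bs = [] ∧ cs = [] := by
  cases bs with
  | nil => simp [listOp] at h; exact ⟨rfl, h⟩
  | cons b bs => simp [listOp] at h

lemma listOp_cons_left (f : β → β → Option β) {a : β} {as bs cs : List β}
    (h : listOp f (a :: as) bs = some cs) :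
    ∃ b bs' c cs', bs = b :: bs' ∧ f a b = some c ∧
      listOp f as bs' = some cs' ∧ cs = c :: cs' := by
  cases bs with
  | nil => simp [listOp] at h
  | cons b bs' =>
    have h' : (f a b).bind
        (fun c => (listOp f as bs').bind fun cs => some (c :: cs)) = some cs := h
    obtain ⟨c, hc, h''⟩ := Option.bind_eq_some_iff.1 h'
    obtain ⟨cs', hcs', hcc⟩ := Option.bind_eq_some_iff.1 h''
    exact ⟨b, bs', c, cs', rfl, hc, hcs', (Option.some.injEq _ _ ▸ hcc).symm ▸ rfl⟩

lemma listOp_append_s11 (f : β → β → Option β) :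
    ∀ (as₁ : List β) {bs₁ cs₁ as₂ bs₂ cs₂ : List β},
    listOp f as₁ bs₁ = some cs₁ → listOp f as₂ bs₂ = some cs₂ →
    listOp f (as₁ ++ as₂) (bs₁ ++ bs₂) = some (cs₁ ++ cs₂)
  | [], bs₁, cs₁, _, _, _, h1, h2 => by
      obtain ⟨rfl, rfl⟩ := listOp_nil_left f h1; simpa using h2
  | a :: as, bs₁, cs₁, _, _, _, h1, h2 => by
      obtain ⟨b, bs', c, cs', rfl, hf, hrest, rfl⟩ := listOp_cons_left f h1
      simp [listOp, hf, listOp_append_s11 f as hrest h2]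

lemma listOp_split (f : β → β → Option β) :
    ∀ (as₁ : List β) {as₂ bs cs : List β},
    listOp f (as₁ ++ as₂) bs = some cs →
    ∃ bs₁ bs₂ cs₁ cs₂, bs = bs₁ ++ bs₂ ∧ cs = cs₁ ++ cs₂ ∧
      listOp f as₁ bs₁ = some cs₁ ∧ listOp f as₂ bs₂ = some cs₂
  | [], as₂, bs, cs, h => ⟨[], bs, [], cs, rfl, rfl, rfl, h⟩
  | a :: as, as₂, bs, cs, h => by
      obtain ⟨b, bs', c, cs', rfl, hf, hrest, rfl⟩ := listOp_cons_left f h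
      obtain ⟨bs₁, bs₂, cs₁, cs₂, rfl, rfl, h1, h2⟩ := listOp_split f as hrest
      exact ⟨b :: bs₁, bs₂, c :: cs₁, cs₂, rfl, rfl, by simp [listOp, hf, h1], h2⟩

lemma listOp_comm (f : β → β → Option β) (hf : ∀ a b, f a b = f b a) :
    ∀ as bs, listOp f as bs = listOp f bs as
  | [], [] => rfl
  | [], _ :: _ => rfl
  | _ :: _, [] => rfl
  | a :: as, b :: bs => by
      simp [listOp, hf a b, listOp_comm f hf as bs]

end Helpers

section Val

variable {α ι : Type} (A : SepAlg α)

lemma valOp_inv {x y z : α × ι} (h : valOp A x y = some z) :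
    x.2 = y.2 ∧ z.2 = x.2 ∧ A.op x.1 y.1 = some z.1 := by
  unfold valOp at h
  split_ifs at h with hc
  · obtain ⟨v, hv, hvz⟩ := Option.map_eq_some_iff.1 h
    refine ⟨hc, ?_, ?_⟩ <;> rw [← hvz] <;> simp [hv]

lemma valOp_comm (x y : α × ι) : valOp A x y = valOp A y x := by
  unfold valOp
  by_cases h : x.2 = y.2
  · simp [h, A.comm]
  · have h' : ¬ y.2 = x.2 := fun hh => h hh.symm
    simp [h, h']

lemma listOp_snd (i : ι) :
    ∀ {as bs cs : List (α × ι)}, listOp (valOp A) as bs = some cs →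
    (∀ x ∈ as, x.2 = i) → ∀ x ∈ cs, x.2 = i
  | [], bs, cs, h, _ => by
      obtain ⟨rfl, rfl⟩ := listOp_nil_left _ h; simp
  | a :: as, bs, cs, h, ha => by
      obtain ⟨b, bs', c, cs', rfl, hf, hrest, rfl⟩ := listOp_cons_left _ h
      intro x hx
      rcases List.mem_cons.1 hx with rfl | hx
      · rw [(valOp_inv A hf).2.1]; exact ha a (by simp)
      · exact listOp_snd i hrest (fun y hy => ha y (by simp [hy])) x hx

noncomputable def unitOf (a : α) : α := (A.unit_exists a).choose

lemma op_unitOf (a : α) : A.op a (unitOf A a) = some a :=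
  (A.unit_exists a).choose_spec.2

noncomputable def uL (l : List (α × ι)) : List (α × ι) :=
  l.map (fun x => (unitOf A x.1, x.2))

lemma valOp_unit (x : α × ι) : valOp A (unitOf A x.1, x.2) x = some x := by
  unfold valOp
  simp [A.comm (unitOf A x.1) x.1, op_unitOf]

lemma listOp_uL : ∀ l : List (α × ι), listOp (valOp A) (uL A l) l = some l
  | [] => rfl
  | x :: l => by
      rw [show uL A (x :: l) = (unitOf A x.1, x.2) :: uL A l from rfl]
      simp [listOp, valOp_unit, listOp_uL l]

lemma uL_snd (l : List (α × ι)) : ∀ x ∈ uL A l, ∀ i, ((∀ y ∈ l, y.2 = i) → x.2 = i) := by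
  intro x hx i hl
  obtain ⟨y, hy, rfl⟩ := List.mem_map.1 hx
  exact hl y hy

lemma mem_nowV_of {J : Set ι} {i : ι} (hi : i ∈ J) {l : List (α × ι)} (hne : l ≠ [])
    (hl : ∀ x ∈ l, x.2 = i) : l ∈ nowV {x : α × ι | x.2 ∈ J} := by
  obtain ⟨L, b, rfl⟩ := (List.eq_nil_or_concat l).resolve_left hne
  have hb : b.2 = i := hl b (by simp)
  refine ⟨L, b.1, i, by simpa using hi,
    fun x hx => hl x (by simp [hx]), ?_⟩
  rw [← hb]
  simp [List.concat_eq_append]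

end Val

/-- hindsight: if `p` is pure then
`now(p) * past(q) = past(p * q)`. -/
theorem stmt11 {α ι : Type} (A : SepAlg α) (p q : Set (α × ι)) (hp : IsPure p) :
    hSep (valOp A) (nowV p) (pastV q) = pastV (valConj A p q) := by
  obtain ⟨J, rfl⟩ := hp
  ext σ
  constructor
  · rintro ⟨τ₁, ⟨ρ, s, i, hsp, hρ, rfl⟩, τ₂, ⟨ρ₁, t, j, ρ₂, htq, hρ₁, hρ₂, rfl⟩, hop⟩
    rw [listOp_comm _ (valOp_comm A)] at hop
    obtain ⟨bs₁, bs₂, cs₁, cs₂, hbs, rfl, h1, h2⟩ := listOp_split _ ρ₁ hop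
    obtain ⟨x, bs₂', c₀, cs₂', rfl, hf, hrest, rfl⟩ := listOp_cons_left _ h2
    obtain ⟨c0, cj⟩ := c₀
    have hx : x ∈ ρ ++ [(s, i)] := by rw [hbs]; simp
    have hx2 : x.2 = i := by
      rcases List.mem_append.1 hx with h | h
      · exact hρ _ h
      · simp at h; rw [h]
    obtain ⟨hji, hc2, hcop⟩ := valOp_inv A hf
    simp only at hji hc2 hcop
    have hji' : j = i := hji.trans hx2
    subst hji'
    subst hc2
    have hiJ : cj ∈ J := hsp
    refine ⟨cs₁, c0, cj, cs₂', ⟨x, by simp only [Set.mem_setOf_eq, hx2]; exact hiJ,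
      (t, cj), htq, ?_⟩, ?_, ?_, rfl⟩
    · rw [valOp_comm]
      exact hf
    · exact listOp_snd A cj h1 hρ₁
    · exact listOp_snd A cj hrest hρ₂
  · rintro ⟨ρ₁, u, i, ρ₂, ⟨a, hap, b, hbq, hab⟩, hρ₁, hρ₂, rfl⟩
    obtain ⟨a1, a2⟩ := a
    obtain ⟨b1, b2⟩ := b
    obtain ⟨hab2, hz2, hcop⟩ := valOp_inv A hab
    simp only at hab2 hz2 hcop
    subst hab2
    subst hz2
    have hiJ : i ∈ J := hap
    refine ⟨uL A ρ₁ ++ (a1, i) :: uL A ρ₂, ?_, ρ₁ ++ (b1, i) :: ρ₂,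
      ⟨ρ₁, b1, i, ρ₂, hbq, hρ₁, hρ₂, rfl⟩, ?_⟩
    · apply mem_nowV_of hiJ (by simp)
      intro x hx
      rcases List.mem_append.1 hx with h | h
      · exact uL_snd A ρ₁ x h i hρ₁
      · rcases List.mem_cons.1 h with rfl | h
        · rfl
        · exact uL_snd A ρ₂ x h i hρ₂
    · have hmid : valOp A (a1, i) (b1, i) = some (u, i) := by
        unfold valOp
        simpa using hcop
      have h2 : listOp (valOp A) ((a1, i) :: uL A ρ₂) ((b1, i) :: ρ₂)
          = some ((u, i) :: ρ₂) := by
        simp [listOp, hmid, listOp_uL]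
      exact listOp_append_s11 _ (uL A ρ₁) (listOp_uL A ρ₁) h2
end
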